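/- Let ρ be the d-dimensional Gaussian density N(0, Σ) with Σ = diag(σ_1²,…,σ_d²), and let T_ε be the diffusion map operator T_ε f(x) = ∫ ∏_{j=1}^d (4πε(1-δ_j))^{-1/2} e^{-|y_j - (1-δ_j)x_j|²/(4ε(1-δ_j))} f(y) dy with δ_j = ε(σ_j² + 4ε)/(σ_j⁴ + 3σ_j²ε + 4ε²). Then T_ε has a unique invariant Gaussian density N(0, Σ_ε) with Σ_ε = diag(σ_{ε,1}²,…,σ_{ε,d}²) where σ_{ε,j}² = 2ε(1-δ_j)/(δ_j(2-δ_j)). -/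

import Mathlib

open MeasureTheory Finset

noncomputable section

variable {d : ℕ}

/-- 1-d centered Gaussian density of variance `v`. -/
def gd (v t : ℝ) : ℝ := (1 / Real.sqrt (2 * Real.pi * v)) * Real.exp (-t ^ 2 / (2 * v))

lemma gd_nonneg (v t : ℝ) : 0 ≤ gd v t := by
  unfold gd; positivity

lemma gd_cont (v : ℝ) : Continuous (gd v) := by
  unfold gd; fun_prop

lemma gd_neg (v t : ℝ) : gd v (-t) = gd v t := by
  unfold gd; rw [neg_sq]

lemma gd_le (v : ℝ) (hv : 0 < v) (t : ℝ) : gd v t ≤ 1 / Real.sqrt (2 * Real.pi * v) := by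
  unfold gd
  have h1 : Real.exp (-t ^ 2 / (2 * v)) ≤ 1 := by
    rw [Real.exp_le_one_iff]
    apply div_nonpos_of_nonpos_of_nonneg
    · simp [sq_nonneg]
    · positivity
  have h2 : (0:ℝ) ≤ 1 / Real.sqrt (2 * Real.pi * v) := by positivity
  calc 1 / Real.sqrt (2 * Real.pi * v) * Real.exp (-t ^ 2 / (2 * v))
      ≤ 1 / Real.sqrt (2 * Real.pi * v) * 1 := mul_le_mul_of_nonneg_left h1 h2
    _ = 1 / Real.sqrt (2 * Real.pi * v) := mul_one _

lemma gd_eq (v : ℝ) :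
    gd v = fun t => (1 / Real.sqrt (2 * Real.pi * v)) * Real.exp (-(1 / (2 * v)) * t ^ 2) := by
  funext t; unfold gd; ring_nf

lemma integrable_gd {v : ℝ} (hv : 0 < v) : Integrable (gd v) := by
  rw [gd_eq]
  exact (integrable_exp_neg_mul_sq (by positivity)).const_mul _

lemma integral_gd {v : ℝ} (hv : 0 < v) : ∫ t, gd v t = 1 := by
  rw [gd_eq]
  rw [integral_const_mul, integral_gaussian]
  rw [one_div, ← Real.sqrt_inv, ← Real.sqrt_mul (by positivity)]
  rw [show (2 * Real.pi * v)⁻¹ * (Real.pi / (1 / (2 * v))) = 1 from by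
    field_simp]
  exact Real.sqrt_one

lemma integral_gd_sub {v : ℝ} (hv : 0 < v) (m : ℝ) : ∫ t, gd v (t - m) = 1 := by
  rw [integral_sub_right_eq_self (gd v) m]
  exact integral_gd hv

/-- The key 1-d Gaussian convolution identity. -/
lemma integral_gd_mul {a b : ℝ} (ha : 0 < a) (hb : 0 < b) (c y : ℝ) :
    ∫ x, gd a (y - c * x) * gd b x = gd (a + c ^ 2 * b) y := by
  have hpi := Real.pi_pos
  have hs0 : 0 < a + c ^ 2 * b := by positivity
  have hm : ∀ x : ℝ, gd a (y - c * x) * gd b x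
      = (gd (a + c ^ 2 * b) y * Real.sqrt ((a + c ^ 2 * b) / (2 * Real.pi * a * b))) *
        Real.exp (-((a + c ^ 2 * b) / (2 * a * b)) *
          (x - c * b * y / (a + c ^ 2 * b)) ^ 2) := by
    intro x
    unfold gd
    have hconst : 1 / Real.sqrt (2 * Real.pi * a) * (1 / Real.sqrt (2 * Real.pi * b))
        = 1 / Real.sqrt (2 * Real.pi * (a + c ^ 2 * b)) *
          Real.sqrt ((a + c ^ 2 * b) / (2 * Real.pi * a * b)) := by
      rw [div_mul_div_comm, one_mul, ← Real.sqrt_mul (by positivity), one_div,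
        ← Real.sqrt_inv, one_div, ← Real.sqrt_inv,
        ← Real.sqrt_mul (by positivity)]
      congr 1
      field_simp
    have hexp : Real.exp (-(y - c * x) ^ 2 / (2 * a)) * Real.exp (-x ^ 2 / (2 * b))
        = Real.exp (-y ^ 2 / (2 * (a + c ^ 2 * b))) *
          Real.exp (-((a + c ^ 2 * b) / (2 * a * b)) *
            (x - c * b * y / (a + c ^ 2 * b)) ^ 2) := by
      rw [← Real.exp_add, ← Real.exp_add]
      congr 1
      field_simp
      ring
    calc 1 / Real.sqrt (2 * Real.pi * a) * Real.exp (-(y - c * x) ^ 2 / (2 * a)) *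
          (1 / Real.sqrt (2 * Real.pi * b) * Real.exp (-x ^ 2 / (2 * b)))
        = (1 / Real.sqrt (2 * Real.pi * a) * (1 / Real.sqrt (2 * Real.pi * b))) *
          (Real.exp (-(y - c * x) ^ 2 / (2 * a)) * Real.exp (-x ^ 2 / (2 * b))) := by ring
      _ = _ := by rw [hconst, hexp]; ring
  simp_rw [hm]
  rw [integral_const_mul]
  rw [integral_sub_right_eq_self
    (fun u => Real.exp (-((a + c ^ 2 * b) / (2 * a * b)) * u ^ 2)) (c * b * y / (a + c ^ 2 * b))]
  rw [integral_gaussian, mul_assoc, ← Real.sqrt_mul (by positivity)]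
  rw [show (a + c ^ 2 * b) / (2 * Real.pi * a * b) * (Real.pi / ((a + c ^ 2 * b) / (2 * a * b)))
      = 1 from by field_simp]
  rw [Real.sqrt_one, mul_one]

lemma gd_zero_inj {w1 w2 : ℝ} (h1 : 0 < w1) (h2 : 0 < w2) (h : gd w1 0 = gd w2 0) :
    w1 = w2 := by
  have hpi := Real.pi_pos
  unfold gd at h
  have hz : ∀ w : ℝ, -(0:ℝ) ^ 2 / (2 * w) = 0 := by intro w; norm_num
  rw [hz w1, hz w2, Real.exp_zero, mul_one, mul_one] at h
  have e1 : (0:ℝ) < Real.sqrt (2 * Real.pi * w1) := by positivity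
  have e2 : (0:ℝ) < Real.sqrt (2 * Real.pi * w2) := by positivity
  field_simp at h
  rw [Real.sqrt_inj (by positivity) (by positivity)] at h
  exact mul_left_cancel₀ (by positivity : (2 * Real.pi) ≠ 0) h.symm


lemma euclid_integral (F : Fin d → ℝ → ℝ) :
    ∫ x : EuclideanSpace ℝ (Fin d), ∏ j, F j (x j) = ∏ j, ∫ t, F j t := by
  rw [← ((EuclideanSpace.volume_preserving_symm_measurableEquiv_toLp (Fin d)).symm).integral_comp'
    (fun x : EuclideanSpace ℝ (Fin d) => ∏ j, F j (x j))]
  exact MeasureTheory.integral_fintype_prod_eq_prod (ι := Fin d) F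

lemma euclid_integrable {F : Fin d → ℝ → ℝ} (h : ∀ j, Integrable (F j)) :
    Integrable (fun x : EuclideanSpace ℝ (Fin d) => ∏ j, F j (x j)) := by
  rw [← MeasurePreserving.integrable_comp_emb
    ((EuclideanSpace.volume_preserving_symm_measurableEquiv_toLp (Fin d)).symm)
    (MeasurableEquiv.measurableEmbedding _)]
  exact Integrable.fintype_prod h

lemma euclid_cont_apply (j : Fin d) : Continuous (fun x : EuclideanSpace ℝ (Fin d) => x j) :=
  (EuclideanSpace.proj j).continuous

/-- for the Gaussian density `N(0, Σ)` with
`Σ = diag(σ₁²,…,σ_d²)`, the diffusion map operator `T_ε` (given by the explicit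
product-Gaussian kernel with `δ_j = ε(σ_j² + 4ε)/(σ_j⁴ + 3σ_j²ε + 4ε²)`) has a
unique invariant Gaussian density `N(0, Σ_ε)` with
`Σ_ε = diag(σ_{ε,j}²)`, `σ_{ε,j}² = 2ε(1-δ_j)/(δ_j(2-δ_j))`. -/
theorem diffusion_map_gaussian_invariant_density
    (σ : Fin d → ℝ) (hσ : ∀ j, 0 < σ j) (ε : ℝ) (hε : 0 < ε)
    (δ : Fin d → ℝ)
    (hδ : ∀ j, δ j = ε * ((σ j) ^ 2 + 4 * ε) /
        ((σ j) ^ 4 + 3 * (σ j) ^ 2 * ε + 4 * ε ^ 2))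
    (Tε : (EuclideanSpace ℝ (Fin d) → ℝ) → EuclideanSpace ℝ (Fin d) → ℝ)
    (hT : ∀ f x, Tε f x = ∫ y : EuclideanSpace ℝ (Fin d),
        (∏ j, (1 / Real.sqrt (4 * Real.pi * ε * (1 - δ j))) *
          Real.exp (-(y j - (1 - δ j) * x j) ^ 2 / (4 * ε * (1 - δ j)))) * f y)
    (σε2 : Fin d → ℝ) (hσε2 : ∀ j, σε2 j = 2 * ε * (1 - δ j) / (δ j * (2 - δ j)))
    (ρε : EuclideanSpace ℝ (Fin d) → ℝ)
    (hρε : ∀ x, ρε x = ∏ j, (1 / Real.sqrt (2 * Real.pi * σε2 j)) *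
        Real.exp (-(x j) ^ 2 / (2 * σε2 j))) :
    -- invariance of `N(0, Σ_ε)`:
    (∀ f : EuclideanSpace ℝ (Fin d) → ℝ, Continuous f → (∃ C, ∀ x, |f x| ≤ C) →
      ∫ x, Tε f x * ρε x = ∫ x, f x * ρε x) ∧
    -- uniqueness among (centered, diagonal) Gaussian densities:
    (∀ v : Fin d → ℝ, (∀ j, 0 < v j) →
      (∀ f : EuclideanSpace ℝ (Fin d) → ℝ, Continuous f → (∃ C, ∀ x, |f x| ≤ C) →
        ∫ x, Tε f x * (∏ j, (1 / Real.sqrt (2 * Real.pi * v j)) *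
            Real.exp (-(x j) ^ 2 / (2 * v j)))
          = ∫ x, f x * (∏ j, (1 / Real.sqrt (2 * Real.pi * v j)) *
            Real.exp (-(x j) ^ 2 / (2 * v j)))) →
      v = σε2) := by
  -- notation
  have hE : True := trivial
  set a : Fin d → ℝ := fun j => 2 * ε * (1 - δ j) with ha_def
  set c : Fin d → ℝ := fun j => 1 - δ j with hc_def
  -- basic positivity facts
  have hδpos : ∀ j, 0 < δ j := by
    intro j; rw [hδ j]
    have := hσ j
    positivity
  have hδlt : ∀ j, δ j < 1 := by
    intro j; rw [hδ j]
    rw [div_lt_one (by have := hσ j; positivity)]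
    nlinarith [pow_pos (hσ j) 4, mul_pos (pow_pos (hσ j) 2) hε]
  have h1δ : ∀ j, 0 < 1 - δ j := fun j => by linarith [hδlt j]
  have h2δ : ∀ j, 0 < 2 - δ j := fun j => by linarith [hδlt j]
  have ha : ∀ j, 0 < a j := fun j => by
    simp only [ha_def]; have := h1δ j; positivity
  have hσε2pos : ∀ j, 0 < σε2 j := by
    intro j; rw [hσε2 j]
    have := h1δ j; have := hδpos j; have := h2δ j
    positivity
  -- the key variance identity
  have hkey : ∀ j, a j + (c j) ^ 2 * σε2 j = σε2 j := by
    intro j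
    rw [hσε2 j]
    simp only [ha_def, hc_def]
    have h1 := (hδpos j).ne'
    have h2 := (h2δ j).ne'
    field_simp
    ring
  -- rewrite the kernel and densities in terms of `gd`
  have hker : ∀ x y : EuclideanSpace ℝ (Fin d),
      (∏ j, (1 / Real.sqrt (4 * Real.pi * ε * (1 - δ j))) *
        Real.exp (-(y j - (1 - δ j) * x j) ^ 2 / (4 * ε * (1 - δ j))))
      = ∏ j, gd (a j) (y j - c j * x j) := by
    intro x y
    refine Finset.prod_congr rfl fun j _ => ?_
    unfold gd
    simp only [ha_def, hc_def]
    congr 2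
    · ring
    · ring
  have hρfun : ρε = fun x => ∏ j, gd (σε2 j) (x j) := funext fun x => hρε x
  subst hρfun
  set K : EuclideanSpace ℝ (Fin d) → EuclideanSpace ℝ (Fin d) → ℝ := fun x y => ∏ j, gd (a j) (y j - c j * x j) with hK_def
  have hKcont : Continuous fun p : EuclideanSpace ℝ (Fin d) × EuclideanSpace ℝ (Fin d) => K p.1 p.2 := by
    apply continuous_finset_prod
    intro j _
    exact (gd_cont (a j)).comp
      (((euclid_cont_apply j).comp continuous_snd).sub
        (continuous_const.mul ((euclid_cont_apply j).comp continuous_fst)))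
  have hKnonneg : ∀ x y, 0 ≤ K x y := fun x y =>
    Finset.prod_nonneg fun j _ => gd_nonneg _ _
  have hKx : ∀ x : EuclideanSpace ℝ (Fin d), Integrable (fun y : EuclideanSpace ℝ (Fin d) => K x y) := by
    intro x
    exact euclid_integrable fun j => (integrable_gd (ha j)).comp_sub_right (c j * x j)
  have hintK : ∀ x : EuclideanSpace ℝ (Fin d), ∫ y, K x y = 1 := by
    intro x
    rw [hK_def]
    rw [euclid_integral (fun j t => gd (a j) (t - c j * x j))]
    exact Finset.prod_eq_one fun j _ => integral_gd_sub (ha j) _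
  have hρcont : Continuous fun x : EuclideanSpace ℝ (Fin d) => ∏ j, gd (σε2 j) (x j) := by
    apply continuous_finset_prod
    intro j _
    exact (gd_cont (σε2 j)).comp (euclid_cont_apply j)
  have hρint : Integrable fun x : EuclideanSpace ℝ (Fin d) => ∏ j, gd (σε2 j) (x j) :=
    euclid_integrable fun j => integrable_gd (hσε2pos j)
  have hρnonneg : ∀ x : EuclideanSpace ℝ (Fin d), 0 ≤ ∏ j, gd (σε2 j) (x j) := fun x =>
    Finset.prod_nonneg fun j _ => gd_nonneg _ _
  -- the convolution identity in d dimensions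
  have hconv : ∀ y : EuclideanSpace ℝ (Fin d), ∫ x, K x y * ∏ j, gd (σε2 j) (x j) = ∏ j, gd (σε2 j) (y j) := by
    intro y
    have : ∀ x : EuclideanSpace ℝ (Fin d), K x y * ∏ j, gd (σε2 j) (x j)
        = ∏ j, (gd (a j) (y j - c j * x j) * gd (σε2 j) (x j)) := by
      intro x; rw [hK_def, ← Finset.prod_mul_distrib]
    simp_rw [this]
    rw [euclid_integral (fun j t => gd (a j) (y j - c j * t) * gd (σε2 j) t)]
    refine Finset.prod_congr rfl fun j _ => ?_
    rw [integral_gd_mul (ha j) (hσε2pos j) (c j) (y j), hkey j]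
  constructor
  · -- invariance
    rintro f hf ⟨C, hC⟩
    have hC0 : 0 ≤ C := le_trans (abs_nonneg _) (hC 0)
    -- the integrand on the product space
    set P : EuclideanSpace ℝ (Fin d) × EuclideanSpace ℝ (Fin d) → ℝ := fun p => f p.2 * K p.1 p.2 * (∏ j, gd (σε2 j) (p.1 j)) with hP_def
    have hPcont : Continuous P := by
      apply Continuous.mul
      · exact (hf.comp continuous_snd).mul hKcont
      · exact hρcont.comp continuous_fst
    have hPx : ∀ x : EuclideanSpace ℝ (Fin d), Integrable fun y => P (x, y) := by
      intro x
      have h1 : Integrable fun y : EuclideanSpace ℝ (Fin d) => f y * K x y :=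
        (hKx x).bdd_mul hf.aestronglyMeasurable
          (Filter.Eventually.of_forall fun y => by rw [Real.norm_eq_abs]; exact hC y)
      simp only [hP_def]
      exact h1.mul_const _
    have hPnorm : ∀ x : EuclideanSpace ℝ (Fin d), ∫ y, ‖P (x, y)‖ ≤ C * ∏ j, gd (σε2 j) (x j) := by
      intro x
      have hle : ∀ y : EuclideanSpace ℝ (Fin d), ‖P (x, y)‖ ≤ (C * ∏ j, gd (σε2 j) (x j)) * K x y := by
        intro y
        rw [hP_def, Real.norm_eq_abs, abs_mul, abs_mul,
          abs_of_nonneg (hKnonneg x y), abs_of_nonneg (hρnonneg x)]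
        calc |f y| * K x y * (∏ j, gd (σε2 j) (x j))
            ≤ C * K x y * (∏ j, gd (σε2 j) (x j)) :=
              mul_le_mul_of_nonneg_right
                (mul_le_mul_of_nonneg_right (hC y) (hKnonneg x y)) (hρnonneg x)
          _ = (C * ∏ j, gd (σε2 j) (x j)) * K x y := by ring
      calc ∫ y, ‖P (x, y)‖ ≤ ∫ y, (C * ∏ j, gd (σε2 j) (x j)) * K x y := by
            apply integral_mono (hPx x).norm (((hKx x)).const_mul _) hle
        _ = C * ∏ j, gd (σε2 j) (x j) := by
            rw [integral_const_mul, hintK x, mul_one]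
    have hPint : Integrable P ((volume : Measure (EuclideanSpace ℝ (Fin d))).prod volume) := by
      refine (integrable_prod_iff hPcont.aestronglyMeasurable).2 ⟨?_, ?_⟩
      · exact Filter.Eventually.of_forall hPx
      · refine Integrable.mono' (hρint.const_mul C)
          hPcont.aestronglyMeasurable.norm.integral_prod_right' ?_
        refine Filter.Eventually.of_forall fun x => ?_
        rw [Real.norm_eq_abs, abs_of_nonneg (integral_nonneg fun y => norm_nonneg _)]
        exact hPnorm x
    -- main computation
    calc ∫ x, Tε f x * ∏ j, gd (σε2 j) (x j)
        = ∫ x : EuclideanSpace ℝ (Fin d), ∫ y : EuclideanSpace ℝ (Fin d), P (x, y) := by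
          refine integral_congr_ae (Filter.Eventually.of_forall fun x => ?_)
          show Tε f x * (∏ j, gd (σε2 j) (x j)) = ∫ y, P (x, y)
          rw [hT f x, ← integral_mul_const]
          refine integral_congr_ae (Filter.Eventually.of_forall fun y => ?_)
          beta_reduce
          rw [hker x y, hP_def]
          ring
      _ = ∫ y : EuclideanSpace ℝ (Fin d), ∫ x : EuclideanSpace ℝ (Fin d), P (x, y) := integral_integral_swap hPint
      _ = ∫ y : EuclideanSpace ℝ (Fin d), f y * ∏ j, gd (σε2 j) (y j) := by
          refine integral_congr_ae (Filter.Eventually.of_forall fun y => ?_)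
          beta_reduce
          have : ∀ x : EuclideanSpace ℝ (Fin d), P (x, y) = f y * (K x y * ∏ j, gd (σε2 j) (x j)) := by
            intro x; rw [hP_def]; ring
          simp_rw [this]
          rw [integral_const_mul, hconv y]
  · -- uniqueness
    intro v hv hinv
    funext j₀
    set f₀ : EuclideanSpace ℝ (Fin d) → ℝ := fun y => gd 1 (y j₀) with hf₀_def
    have hcont : Continuous f₀ := (gd_cont 1).comp (euclid_cont_apply j₀)
    have hbdd : ∃ C, ∀ x, |f₀ x| ≤ C := by
      refine ⟨1 / Real.sqrt (2 * Real.pi * 1), fun x => ?_⟩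
      rw [hf₀_def, abs_of_nonneg (gd_nonneg _ _)]
      exact gd_le 1 one_pos _
    have heq := hinv f₀ hcont hbdd
    -- compute Tε f₀
    have hTf₀ : ∀ x : EuclideanSpace ℝ (Fin d), Tε f₀ x = gd (a j₀ + 1 ^ 2 * 1) (c j₀ * x j₀) := by
      intro x
      rw [hT f₀ x]
      have h1 : ∀ y : EuclideanSpace ℝ (Fin d),
          (∏ j, (1 / Real.sqrt (4 * Real.pi * ε * (1 - δ j))) *
            Real.exp (-(y j - (1 - δ j) * x j) ^ 2 / (4 * ε * (1 - δ j)))) * f₀ y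
          = ∏ j, (gd (a j) (y j - c j * x j) * (if j = j₀ then gd 1 (y j) else 1)) := by
        intro y
        rw [hker x y, Finset.prod_mul_distrib, Finset.prod_ite_eq', if_pos (Finset.mem_univ _)]
      simp_rw [h1]
      rw [euclid_integral (fun j t => gd (a j) (t - c j * x j) * (if j = j₀ then gd 1 t else 1))]
      have h2 : ∀ j, (∫ t, gd (a j) (t - c j * x j) * (if j = j₀ then gd 1 t else 1))
          = if j = j₀ then gd (a j + 1 ^ 2 * 1) (c j * x j) else 1 := by
        intro j
        by_cases hj : j = j₀
        · simp only [if_pos hj]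
          have h3 : ∀ t : ℝ, gd (a j) (t - c j * x j) = gd (a j) (c j * x j - 1 * t) := by
            intro t
            rw [one_mul, ← neg_sub t (c j * x j), gd_neg]
          simp_rw [h3]
          exact integral_gd_mul (ha j) one_pos 1 (c j * x j)
        · simp only [hj, if_false, mul_one]
          exact integral_gd_sub (ha j) _
      simp_rw [h2]
      rw [Finset.prod_ite_eq', if_pos (Finset.mem_univ _)]
    -- now compute both sides of heq
    have hLHS : ∫ x : EuclideanSpace ℝ (Fin d), Tε f₀ x * (∏ j, (1 / Real.sqrt (2 * Real.pi * v j)) *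
        Real.exp (-(x j) ^ 2 / (2 * v j)))
        = gd ((a j₀ + 1 ^ 2 * 1) + (c j₀) ^ 2 * v j₀) 0 := by
      have h1 : ∀ x : EuclideanSpace ℝ (Fin d), Tε f₀ x * (∏ j, (1 / Real.sqrt (2 * Real.pi * v j)) *
          Real.exp (-(x j) ^ 2 / (2 * v j)))
          = ∏ j, ((if j = j₀ then gd (a j₀ + 1 ^ 2 * 1) (0 - c j₀ * x j) else 1) *
              gd (v j) (x j)) := by
        intro x
        conv_rhs => rw [Finset.prod_mul_distrib, Finset.prod_ite_eq', if_pos (Finset.mem_univ j₀)]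
        rw [hTf₀ x, show (0 : ℝ) - c j₀ * x j₀ = -(c j₀ * x j₀) from by ring, gd_neg]
        rfl
      simp_rw [h1]
      rw [euclid_integral (fun j t => (if j = j₀ then gd (a j₀ + 1 ^ 2 * 1) (0 - c j₀ * t) else 1) *
        gd (v j) t)]
      have h2 : ∀ j, (∫ t, (if j = j₀ then gd (a j₀ + 1 ^ 2 * 1) (0 - c j₀ * t) else 1) *
          gd (v j) t) = if j = j₀ then gd ((a j₀ + 1 ^ 2 * 1) + (c j₀) ^ 2 * v j₀) 0 else 1 := by
        intro j
        by_cases hj : j = j₀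
        · simp only [hj, eq_self_iff_true, if_true]
          exact integral_gd_mul (by have := ha j₀; positivity) (hv j₀) (c j₀) 0
        · simp only [hj, if_false, one_mul]
          exact integral_gd (hv j)
      simp_rw [h2]
      rw [Finset.prod_ite_eq', if_pos (Finset.mem_univ _)]
    have hRHS : ∫ x : EuclideanSpace ℝ (Fin d), f₀ x * (∏ j, (1 / Real.sqrt (2 * Real.pi * v j)) *
        Real.exp (-(x j) ^ 2 / (2 * v j)))
        = gd (1 + 1 ^ 2 * v j₀) 0 := by
      have h1 : ∀ x : EuclideanSpace ℝ (Fin d), f₀ x * (∏ j, (1 / Real.sqrt (2 * Real.pi * v j)) *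
          Real.exp (-(x j) ^ 2 / (2 * v j)))
          = ∏ j, ((if j = j₀ then gd 1 (0 - 1 * x j) else 1) * gd (v j) (x j)) := by
        intro x
        conv_rhs => rw [Finset.prod_mul_distrib, Finset.prod_ite_eq', if_pos (Finset.mem_univ j₀)]
        rw [show (0 : ℝ) - 1 * x j₀ = -(x j₀) from by ring, gd_neg]
        rfl
      simp_rw [h1]
      rw [euclid_integral (fun j t => (if j = j₀ then gd 1 (0 - 1 * t) else 1) * gd (v j) t)]
      have h2 : ∀ j, (∫ t, (if j = j₀ then gd 1 (0 - 1 * t) else 1) * gd (v j) t)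
          = if j = j₀ then gd (1 + 1 ^ 2 * v j₀) 0 else 1 := by
        intro j
        by_cases hj : j = j₀
        · simp only [hj, eq_self_iff_true, if_true]
          exact integral_gd_mul one_pos (hv j₀) 1 0
        · simp only [hj, if_false, one_mul]
          exact integral_gd (hv j)
      simp_rw [h2]
      rw [Finset.prod_ite_eq', if_pos (Finset.mem_univ _)]
    rw [hLHS, hRHS] at heq
    -- deduce equality of variances
    have hw1 : 0 < (a j₀ + 1 ^ 2 * 1) + (c j₀) ^ 2 * v j₀ := by
      have := ha j₀; have := hv j₀; positivity
    have hw2 : 0 < 1 + 1 ^ 2 * v j₀ := by have := hv j₀; positivity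
    have hvar : (a j₀ + 1 ^ 2 * 1) + (c j₀) ^ 2 * v j₀ = 1 + 1 ^ 2 * v j₀ :=
      gd_zero_inj hw1 hw2 heq
    -- from `hvar` and `hkey` conclude
    have haj : a j₀ + (c j₀) ^ 2 * v j₀ = v j₀ := by
      have h1 : (1:ℝ) ^ 2 * 1 = 1 := by norm_num
      have h2 : (1:ℝ) ^ 2 * v j₀ = v j₀ := by norm_num
      linarith [hvar]
    have hkj := hkey j₀
    have hcsq : 0 < 1 - (c j₀) ^ 2 := by
      have h1 : 1 - (c j₀) ^ 2 = δ j₀ * (2 - δ j₀) := by simp only [hc_def]; ring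
      rw [h1]
      exact mul_pos (hδpos j₀) (h2δ j₀)
    have : (1 - (c j₀) ^ 2) * v j₀ = (1 - (c j₀) ^ 2) * σε2 j₀ := by
      have e1 : (1 - (c j₀) ^ 2) * v j₀ = v j₀ - (c j₀) ^ 2 * v j₀ := by ring
      have e2 : (1 - (c j₀) ^ 2) * σε2 j₀ = σε2 j₀ - (c j₀) ^ 2 * σε2 j₀ := by ring
      linarith [haj, hkj]
    exact mul_left_cancel₀ (ne_of_gt hcsq) this

end
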